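/- The POB representation is unique: the value map V is injective on POB(n,r) numbers. That is, if B and B′ are two binary strings of length n, each with exactly r ones, and V(B) = V(B′), then B = B′, where V(B) = Σ_{j=0}^{n-1} b_j · C(j, p_j) with p_j = Σ_{i=0}^{j} b_i. -/

import Mathlib

/-- Number of ones among positions `0,…,j`. -/
def pobPc (b : ℕ → Bool) (j : ℕ) : ℕ :=
  ((Finset.range (j+1)).filter (fun i => b i = true)).card

/-- POB value for a `ℕ`-indexed bit string, over positions `< n`. -/
def pobVn (n : ℕ) (b : ℕ → Bool) : ℕ :=
  ∑ j ∈ Finset.range n, if b j then Nat.choose j (pobPc b j) else 0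

def pobVal (n : ℕ) (b : Fin n → Bool) : ℕ :=
  ∑ j : Fin n,
    if b j then Nat.choose (j : ℕ) ((Finset.Iic j).filter (fun i => b i = true)).card
    else 0

lemma pobVn_lt (b : ℕ → Bool) (n : ℕ) :
    pobVn n b < Nat.choose n (((Finset.range n).filter (fun i => b i = true)).card) := by
  induction n with
  | zero => simp [pobVn]
  | succ n ih =>
    rw [pobVn, Finset.sum_range_succ, ← pobVn, Finset.range_add_one, Finset.filter_insert]
    by_cases h : b n = true
    · rw [if_pos h, if_pos h, Finset.card_insert_of_notMem (by simp)]
      have hpc : pobPc b n = ((Finset.range n).filter (fun i => b i = true)).card + 1 := by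
        unfold pobPc
        rw [Finset.range_add_one, Finset.filter_insert, if_pos h,
          Finset.card_insert_of_notMem (by simp)]
      rw [hpc, Nat.choose_succ_succ]
      simp only [Nat.succ_eq_add_one]
      omega
    · rw [if_neg h, if_neg h]
      calc pobVn n b + 0 < Nat.choose n (((Finset.range n).filter (fun i => b i = true)).card) := by
              simpa using ih
        _ ≤ _ := Nat.choose_le_choose _ (Nat.le_succ n)

lemma pobVn_inj (b b' : ℕ → Bool) : ∀ n,
    ((Finset.range n).filter (fun i => b i = true)).card
      = ((Finset.range n).filter (fun i => b' i = true)).card →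
    pobVn n b = pobVn n b' → ∀ j < n, b j = b' j := by
  intro n
  induction n with
  | zero => intro _ _ j hj; omega
  | succ n ih =>
    intro hcard hval j hj
    have hsplit : ∀ c : ℕ → Bool, ((Finset.range (n+1)).filter (fun i => c i = true)).card
        = ((Finset.range n).filter (fun i => c i = true)).card + (if c n = true then 1 else 0) := by
      intro c
      rw [Finset.range_add_one, Finset.filter_insert]
      by_cases h : c n = true
      · rw [if_pos h, if_pos h, Finset.card_insert_of_notMem (by simp)]
      · simp [h]
    have hvsplit : ∀ c : ℕ → Bool, pobVn (n+1) c
        = pobVn n c + (if c n = true then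
            Nat.choose n (((Finset.range (n+1)).filter (fun i => c i = true)).card) else 0) := by
      intro c
      rw [pobVn, Finset.sum_range_succ, ← pobVn]
      congr 1
    rw [hvsplit, hvsplit] at hval
    by_cases h1 : b n = true <;> by_cases h2 : b' n = true
    · -- both top bits set
      have hc : ((Finset.range n).filter (fun i => b i = true)).card
          = ((Finset.range n).filter (fun i => b' i = true)).card := by
        have hs1 := hsplit b; have hs2 := hsplit b'
        rw [if_pos h1] at hs1; rw [if_pos h2] at hs2; omega
      have hv : pobVn n b = pobVn n b' := by
        rw [if_pos h1, if_pos h2, hcard] at hval; omega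
      rcases Nat.lt_succ_iff_lt_or_eq.mp hj with hj' | hj'
      · exact ih hc hv j hj'
      · subst hj'; rw [h1, h2]
    · -- b n = true, b' n = false : contradiction
      exfalso
      rw [if_pos h1, if_neg h2] at hval
      have hr : ((Finset.range (n+1)).filter (fun i => b i = true)).card
          = ((Finset.range n).filter (fun i => b' i = true)).card := by
        have hs2 := hsplit b'; rw [if_neg h2] at hs2; omega
      have := pobVn_lt b' n
      rw [← hr] at this
      omega
    · exfalso
      rw [if_neg h1, if_pos h2] at hval
      have hr : ((Finset.range (n+1)).filter (fun i => b' i = true)).card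
          = ((Finset.range n).filter (fun i => b i = true)).card := by
        have hs1 := hsplit b; rw [if_neg h1] at hs1; omega
      have := pobVn_lt b n
      rw [← hr] at this
      omega
    · have hc : ((Finset.range n).filter (fun i => b i = true)).card
          = ((Finset.range n).filter (fun i => b' i = true)).card := by
        have hs1 := hsplit b; have hs2 := hsplit b'
        rw [if_neg h1] at hs1; rw [if_neg h2] at hs2; omega
      have hv : pobVn n b = pobVn n b' := by
        rw [if_neg h1, if_neg h2] at hval; omega
      rcases Nat.lt_succ_iff_lt_or_eq.mp hj with hj' | hj'
      · exact ih hc hv j hj'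
      · subst hj'
        rw [Bool.not_eq_true] at h1 h2
        rw [h1, h2]

def pobExt (n : ℕ) (b : Fin n → Bool) : ℕ → Bool :=
  fun m => if h : m < n then b ⟨m, h⟩ else false

lemma pobExt_card_iic (n : ℕ) (b : Fin n → Bool) (j : Fin n) :
    ((Finset.Iic j).filter (fun i => b i = true)).card
      = ((Finset.range ((j : ℕ)+1)).filter (fun i => pobExt n b i = true)).card := by
  refine Finset.card_bij (fun i _ => (i : ℕ)) ?_ ?_ ?_
  · intro i hi
    simp only [Finset.mem_filter, Finset.mem_Iic] at hi
    simp only [Finset.mem_filter, Finset.mem_range, Nat.lt_succ_iff]; simp only [pobExt]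
    exact ⟨hi.1, by simpa [i.isLt] using hi.2⟩
  · intro i _ i' _ h
    exact Fin.val_injective h
  · intro m hm
    simp only [Finset.mem_filter, Finset.mem_range, Nat.lt_succ_iff] at hm; simp only [pobExt] at hm
    have hmn : m < n := lt_of_le_of_lt hm.1 j.isLt
    refine ⟨⟨m, hmn⟩, ?_, rfl⟩
    simp only [Finset.mem_filter, Finset.mem_Iic]
    refine ⟨hm.1, ?_⟩
    simpa [hmn] using hm.2

lemma pobExt_card (n : ℕ) (b : Fin n → Bool) :
    (Finset.univ.filter (fun j : Fin n => b j = true)).card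
      = ((Finset.range n).filter (fun i => pobExt n b i = true)).card := by
  refine Finset.card_bij (fun i _ => (i : ℕ)) ?_ ?_ ?_
  · intro i hi
    simp only [Finset.mem_filter, Finset.mem_univ, true_and] at hi
    simp only [Finset.mem_filter, Finset.mem_range]; simp only [pobExt]
    exact ⟨i.isLt, by simpa [i.isLt] using hi⟩
  · intro i _ i' _ h
    exact Fin.val_injective h
  · intro m hm
    simp only [Finset.mem_filter, Finset.mem_range] at hm; simp only [pobExt] at hm
    refine ⟨⟨m, hm.1⟩, ?_, rfl⟩
    simp only [Finset.mem_filter, Finset.mem_univ, true_and]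
    simpa [hm.1] using hm.2

lemma pobVal_eq_pobVn (n : ℕ) (b : Fin n → Bool) :
    pobVal n b = pobVn n (pobExt n b) := by
  rw [pobVal, pobVn]
  rw [← Fin.sum_univ_eq_sum_range (fun j => if pobExt n b j then Nat.choose j (pobPc (pobExt n b) j) else 0) n]
  apply Finset.sum_congr rfl
  intro j _
  have hbj : pobExt n b (j : ℕ) = b j := by simp [pobExt, j.isLt]
  rw [hbj, pobPc, ← pobExt_card_iic]

theorem pobVal_injective (n r : ℕ) (hrn : r ≤ n) (b b' : Fin n → Bool)
    (hb : (Finset.univ.filter (fun j : Fin n => b j = true)).card = r)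
    (hb' : (Finset.univ.filter (fun j : Fin n => b' j = true)).card = r)
    (hval : pobVal n b = pobVal n b') :
    b = b' := by
  funext j
  have hcard : ((Finset.range n).filter (fun i => pobExt n b i = true)).card
      = ((Finset.range n).filter (fun i => pobExt n b' i = true)).card := by
    rw [← pobExt_card, ← pobExt_card, hb, hb']
  have hv : pobVn n (pobExt n b) = pobVn n (pobExt n b') := by
    rw [← pobVal_eq_pobVn, ← pobVal_eq_pobVn, hval]
  have := pobVn_inj (pobExt n b) (pobExt n b') n hcard hv (j : ℕ) j.isLt
  simpa [pobExt, j.isLt] using this
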